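/- arXiv:1506.01785 — 3 statements merged into one kernel-verified Lean document; each statement's English description precedes it below -/
import Mathlib

section
/- For any constants α > 0, C₁ > 0, δ > 0, there exists C > 0 such that for all sufficiently small h > 0 and all x ∈ [C₁ h^{2/3}, δ], one has x^{-1/4} ∫_{C₁ h^{2/3}}^{δ} t^{-1/4} e^{-α |t^{3/2} - x^{3/2}|/h} dt ≤ C h^{1/3}. -/
open MeasureTheory Real

/-- Lower bound for increments of `t ↦ t^{3/2}` on `[a, ∞)`. -/
lemma phi_incr {a s u : ℝ} (ha : 0 < a) (hs : a ≤ s) (hu : a ≤ u) (hus : u ≤ s) :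
    a ^ ((1:ℝ)/2) * (s - u) ≤ s ^ ((3:ℝ)/2) - u ^ ((3:ℝ)/2) := by
  have ha0 : (0:ℝ) ≤ a := ha.le
  have hu0 : (0:ℝ) ≤ u := le_trans ha0 hu
  have hs0 : (0:ℝ) ≤ s := le_trans hu0 hus
  set p := s ^ ((1:ℝ)/2) with hp
  set q := u ^ ((1:ℝ)/2) with hq
  set r := a ^ ((1:ℝ)/2) with hr
  have hr0 : 0 ≤ r := Real.rpow_nonneg ha0 _
  have hq0 : 0 ≤ q := Real.rpow_nonneg hu0 _
  have hrq : r ≤ q := Real.rpow_le_rpow ha0 hu (by norm_num)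
  have hrp : r ≤ p := Real.rpow_le_rpow ha0 hs (by norm_num)
  have hqp : q ≤ p := Real.rpow_le_rpow hu0 hus (by norm_num)
  have hs2 : s = p ^ 2 := by
    rw [hp, ← Real.rpow_natCast (s ^ ((1:ℝ)/2)) 2, ← Real.rpow_mul hs0]
    norm_num
  have hu2 : u = q ^ 2 := by
    rw [hq, ← Real.rpow_natCast (u ^ ((1:ℝ)/2)) 2, ← Real.rpow_mul hu0]
    norm_num
  have hs3 : s ^ ((3:ℝ)/2) = p ^ 3 := by
    rw [hp, ← Real.rpow_natCast (s ^ ((1:ℝ)/2)) 3, ← Real.rpow_mul hs0]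
    norm_num
  have hu3 : u ^ ((3:ℝ)/2) = q ^ 3 := by
    rw [hq, ← Real.rpow_natCast (u ^ ((1:ℝ)/2)) 3, ← Real.rpow_mul hu0]
    norm_num
  rw [hs3, hu3]
  nth_rewrite 1 [hs2, hu2]
  nlinarith [mul_nonneg (sub_nonneg.2 hqp) (mul_nonneg hq0 (sub_nonneg.2 hrq)),
    mul_nonneg (sub_nonneg.2 hqp) (mul_nonneg (le_trans hr0 hrp) (sub_nonneg.2 hrp)),
    mul_nonneg (sub_nonneg.2 hqp) (mul_nonneg (le_trans hr0 hrp) hq0)]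

lemma phi_incr_abs {a s u : ℝ} (ha : 0 < a) (hs : a ≤ s) (hu : a ≤ u) :
    a ^ ((1:ℝ)/2) * |s - u| ≤ |s ^ ((3:ℝ)/2) - u ^ ((3:ℝ)/2)| := by
  rcases le_total u s with h | h
  · rw [abs_of_nonneg (sub_nonneg.2 h), abs_of_nonneg (sub_nonneg.2
      (Real.rpow_le_rpow (le_trans ha.le hu) h (by norm_num)))]
    exact phi_incr ha hs hu h
  · rw [abs_sub_comm, abs_sub_comm (s ^ ((3:ℝ)/2)),
      abs_of_nonneg (sub_nonneg.2 h), abs_of_nonneg (sub_nonneg.2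
      (Real.rpow_le_rpow (le_trans ha.le hs) h (by norm_num)))]
    exact phi_incr ha hu hs h

lemma exp_integral_right {β : ℝ} (hβ : 0 < β) (x b : ℝ) (hxb : x ≤ b) :
    ∫ t in x..b, Real.exp (-β * (t - x)) ≤ 1 / β := by
  have hderiv : ∀ t ∈ Set.uIcc x b, HasDerivAt (fun t => -Real.exp (-β * (t - x)) / β)
      (Real.exp (-β * (t - x))) t := by
    intro t _
    have h1 : HasDerivAt (fun t : ℝ => -β * (t - x)) (-β) t := by
      simpa using ((hasDerivAt_id t).sub_const x).const_mul (-β)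
    have h2 := (h1.exp).neg.div_const β
    refine h2.congr_deriv ?_
    field_simp
  have hint : IntervalIntegrable (fun t => Real.exp (-β * (t - x))) volume x b :=
    (Continuous.intervalIntegrable (by continuity) x b)
  rw [intervalIntegral.integral_eq_sub_of_hasDerivAt hderiv hint]
  have h1 : 0 ≤ Real.exp (-β * (b - x)) := (Real.exp_pos _).le
  have h3 : 0 ≤ Real.exp (-β * (b - x)) / β := div_nonneg h1 hβ.le
  have h2 : Real.exp (-β * (x - x)) = 1 := by simp
  rw [h2]
  have h4 : -Real.exp (-β * (b - x)) / β = -(Real.exp (-β * (b - x)) / β) := by ring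
  have h5 : (-1:ℝ) / β = -(1 / β) := by ring
  linarith
lemma exp_integral_left {β : ℝ} (hβ : 0 < β) (x a : ℝ) (hax : a ≤ x) :
    ∫ t in a..x, Real.exp (-β * (x - t)) ≤ 1 / β := by
  have hderiv : ∀ t ∈ Set.uIcc a x, HasDerivAt (fun t => Real.exp (-β * (x - t)) / β)
      (Real.exp (-β * (x - t))) t := by
    intro t _
    have h1 : HasDerivAt (fun t : ℝ => -β * (x - t)) β t := by
      simpa using ((hasDerivAt_id t).const_sub x).const_mul (-β)
    have h2 := (h1.exp).div_const β
    refine h2.congr_deriv ?_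
    field_simp
  have hint : IntervalIntegrable (fun t => Real.exp (-β * (x - t))) volume a x :=
    (Continuous.intervalIntegrable (by continuity) a x)
  rw [intervalIntegral.integral_eq_sub_of_hasDerivAt hderiv hint]
  have h1 : 0 ≤ Real.exp (-β * (x - a)) := (Real.exp_pos _).le
  have h3 : 0 ≤ Real.exp (-β * (x - a)) / β := div_nonneg h1 hβ.le
  have h2 : Real.exp (-β * (x - x)) = 1 := by simp
  rw [h2]
  linarith

lemma exp_abs_integral {β : ℝ} (hβ : 0 < β) (a b x : ℝ) (hax : a ≤ x) (hxb : x ≤ b) :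
    ∫ t in a..b, Real.exp (-β * |t - x|) ≤ 2 / β := by
  have hcont : Continuous fun t : ℝ => Real.exp (-β * |t - x|) := by continuity
  rw [← intervalIntegral.integral_add_adjacent_intervals
    (hcont.intervalIntegrable a x) (hcont.intervalIntegrable x b)]
  have e1 : (∫ t in a..x, Real.exp (-β * |t - x|)) = ∫ t in a..x, Real.exp (-β * (x - t)) := by
    apply intervalIntegral.integral_congr
    intro t ht
    rw [Set.uIcc_of_le hax] at ht
    show Real.exp (-β * |t - x|) = Real.exp (-β * (x - t))
    rw [abs_sub_comm, abs_of_nonneg (sub_nonneg.2 ht.2)]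
  have e2 : (∫ t in x..b, Real.exp (-β * |t - x|)) = ∫ t in x..b, Real.exp (-β * (t - x)) := by
    apply intervalIntegral.integral_congr
    intro t ht
    rw [Set.uIcc_of_le hxb] at ht
    show Real.exp (-β * |t - x|) = Real.exp (-β * (t - x))
    rw [abs_of_nonneg (sub_nonneg.2 ht.1)]
  rw [e1, e2]
  have := exp_integral_left hβ x a hax
  have := exp_integral_right hβ x b hxb
  have : (1:ℝ)/β + 1/β = 2/β := by ring
  linarith [exp_integral_left hβ x a hax, exp_integral_right hβ x b hxb]

/-- For any constants `α > 0`, `C₁ > 0`, `δ > 0`, there exists `C > 0` such that for all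
sufficiently small `h > 0` and all `x ∈ [C₁ h^{2/3}, δ]`, one has
`x^{-1/4} ∫_{C₁ h^{2/3}}^{δ} t^{-1/4} e^{-α |t^{3/2} - x^{3/2}|/h} dt ≤ C h^{1/3}`. -/
theorem stmt1 (α C₁ δ : ℝ) (hα : 0 < α) (hC₁ : 0 < C₁) (hδ : 0 < δ) :
    ∃ C > 0, ∃ h₀ > 0, ∀ h : ℝ, 0 < h → h < h₀ →
      ∀ x ∈ Set.Icc (C₁ * h ^ ((2:ℝ)/3)) δ,
        x ^ (-(1:ℝ)/4) * (∫ t in (C₁ * h ^ ((2:ℝ)/3))..δ,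
            t ^ (-(1:ℝ)/4) * Real.exp (-α * |t ^ ((3:ℝ)/2) - x ^ ((3:ℝ)/2)| / h))
          ≤ C * h ^ ((1:ℝ)/3) := by
  refine ⟨2 / (α * C₁), by positivity, 1, one_pos, ?_⟩
  intro h hh _ x hx
  set a := C₁ * h ^ ((2:ℝ)/3) with ha_def
  have ha : 0 < a := by positivity
  obtain ⟨hax, hxδ⟩ := hx
  have hx0 : 0 < x := lt_of_lt_of_le ha hax
  have haδ : a ≤ δ := le_trans hax hxδ
  set β := α * a ^ ((1:ℝ)/2) / h with hβ_def
  have hβ : 0 < β := by positivity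
  -- pointwise bound for the integrand
  have key : ∀ t ∈ Set.Icc a δ,
      t ^ (-(1:ℝ)/4) * Real.exp (-α * |t ^ ((3:ℝ)/2) - x ^ ((3:ℝ)/2)| / h)
        ≤ a ^ (-(1:ℝ)/4) * Real.exp (-β * |t - x|) := by
    intro t ht
    have ht0 : 0 < t := lt_of_lt_of_le ha ht.1
    have h1 : t ^ (-(1:ℝ)/4) ≤ a ^ (-(1:ℝ)/4) :=
      Real.rpow_le_rpow_of_nonpos ha ht.1 (by norm_num)
    have h2 : Real.exp (-α * |t ^ ((3:ℝ)/2) - x ^ ((3:ℝ)/2)| / h) ≤ Real.exp (-β * |t - x|) := by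
      apply Real.exp_le_exp.2
      have hrw : -β * |t - x| = -(α * (a ^ ((1:ℝ)/2) * |t - x|)) / h := by
        rw [hβ_def]; ring
      rw [hrw, div_le_div_iff₀ hh hh]
      have := phi_incr_abs ha ht.1 hax
      have habs : 0 ≤ |t - x| := abs_nonneg _
      nlinarith [mul_le_mul_of_nonneg_left this hα.le]
    calc t ^ (-(1:ℝ)/4) * Real.exp (-α * |t ^ ((3:ℝ)/2) - x ^ ((3:ℝ)/2)| / h)
        ≤ a ^ (-(1:ℝ)/4) * Real.exp (-α * |t ^ ((3:ℝ)/2) - x ^ ((3:ℝ)/2)| / h) :=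
          mul_le_mul_of_nonneg_right h1 (Real.exp_pos _).le
      _ ≤ a ^ (-(1:ℝ)/4) * Real.exp (-β * |t - x|) :=
          mul_le_mul_of_nonneg_left h2 (Real.rpow_nonneg ha.le _)
  -- integrability of both integrands
  have hf_cont : ContinuousOn (fun t : ℝ =>
      t ^ (-(1:ℝ)/4) * Real.exp (-α * |t ^ ((3:ℝ)/2) - x ^ ((3:ℝ)/2)| / h)) (Set.Icc a δ) := by
    apply ContinuousOn.mul
    · exact fun t ht => (Real.continuousAt_rpow_const t _
        (Or.inl (ne_of_gt (lt_of_lt_of_le ha ht.1)))).continuousWithinAt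
    · apply Real.continuous_exp.comp_continuousOn
      apply ContinuousOn.div_const
      apply ContinuousOn.mul continuousOn_const
      apply ContinuousOn.abs
      apply ContinuousOn.sub _ continuousOn_const
      exact fun t ht => (Real.continuousAt_rpow_const t _
        (Or.inl (ne_of_gt (lt_of_lt_of_le ha ht.1)))).continuousWithinAt
  have hf_int : IntervalIntegrable (fun t : ℝ =>
      t ^ (-(1:ℝ)/4) * Real.exp (-α * |t ^ ((3:ℝ)/2) - x ^ ((3:ℝ)/2)| / h)) volume a δ := by
    apply ContinuousOn.intervalIntegrable
    rwa [Set.uIcc_of_le haδ]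
  have hg_int : IntervalIntegrable (fun t : ℝ =>
      a ^ (-(1:ℝ)/4) * Real.exp (-β * |t - x|)) volume a δ :=
    Continuous.intervalIntegrable (by continuity) a δ
  -- compare the integrals
  have hmono := intervalIntegral.integral_mono_on haδ hf_int hg_int key
  have hgval : (∫ t in a..δ, a ^ (-(1:ℝ)/4) * Real.exp (-β * |t - x|))
      ≤ a ^ (-(1:ℝ)/4) * (2 / β) := by
    rw [intervalIntegral.integral_const_mul]
    exact mul_le_mul_of_nonneg_left (exp_abs_integral hβ a δ x hax hxδ)
      (Real.rpow_nonneg ha.le _)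
  have hx1 : x ^ (-(1:ℝ)/4) ≤ a ^ (-(1:ℝ)/4) :=
    Real.rpow_le_rpow_of_nonpos ha hax (by norm_num)
  have hint_nonneg : 0 ≤ ∫ t in a..δ,
      t ^ (-(1:ℝ)/4) * Real.exp (-α * |t ^ ((3:ℝ)/2) - x ^ ((3:ℝ)/2)| / h) := by
    apply intervalIntegral.integral_nonneg haδ
    intro t ht
    have ht0 : 0 < t := lt_of_lt_of_le ha ht.1
    positivity
  have hchain : x ^ (-(1:ℝ)/4) * (∫ t in a..δ,
      t ^ (-(1:ℝ)/4) * Real.exp (-α * |t ^ ((3:ℝ)/2) - x ^ ((3:ℝ)/2)| / h))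
      ≤ a ^ (-(1:ℝ)/4) * (a ^ (-(1:ℝ)/4) * (2 / β)) := by
    calc x ^ (-(1:ℝ)/4) * (∫ t in a..δ,
          t ^ (-(1:ℝ)/4) * Real.exp (-α * |t ^ ((3:ℝ)/2) - x ^ ((3:ℝ)/2)| / h))
        ≤ a ^ (-(1:ℝ)/4) * (∫ t in a..δ,
          t ^ (-(1:ℝ)/4) * Real.exp (-α * |t ^ ((3:ℝ)/2) - x ^ ((3:ℝ)/2)| / h)) :=
          mul_le_mul_of_nonneg_right hx1 hint_nonneg
      _ ≤ a ^ (-(1:ℝ)/4) * (a ^ (-(1:ℝ)/4) * (2 / β)) := by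
          apply mul_le_mul_of_nonneg_left _ (Real.rpow_nonneg ha.le _)
          exact le_trans hmono hgval
  refine le_trans hchain (le_of_eq ?_)
  -- arithmetic: a^{-1/4} * (a^{-1/4} * (2/β)) = 2/(α C₁) * h^{1/3}
  have hS : (0:ℝ) < a ^ ((1:ℝ)/2) := Real.rpow_pos_of_pos ha _
  have hA : a ^ (-(1:ℝ)/4) * a ^ (-(1:ℝ)/4) * (a ^ ((1:ℝ)/2))⁻¹ = a⁻¹ := by
    rw [← Real.rpow_neg ha.le, ← Real.rpow_add ha, ← Real.rpow_add ha, ← Real.rpow_neg_one a]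
    norm_num
  have key3 : h ^ ((1:ℝ)/3) * h ^ ((2:ℝ)/3) = h := by
    rw [← Real.rpow_add hh]; norm_num
  have step1 : a ^ (-(1:ℝ)/4) * (a ^ (-(1:ℝ)/4) * (2 / β)) =
      2 * (a ^ (-(1:ℝ)/4) * a ^ (-(1:ℝ)/4) * (a ^ ((1:ℝ)/2))⁻¹) * h / α := by
    rw [hβ_def]
    field_simp
  rw [step1, hA, ha_def, mul_inv]
  have h23 : (0:ℝ) < h ^ ((2:ℝ)/3) := Real.rpow_pos_of_pos hh _
  field_simp
  linear_combination (-1) * key3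
end

section
/- The double integral ∫_0^∞ ∫_0^∞ (t s)^{-1/2} e^{-|t^{3/2} - s^{3/2}|} dt ds is finite. -/
open MeasureTheory Real Set

lemma cube_ineq {x y : ℝ} (hx : 0 ≤ x) (hy : 0 ≤ y) :
    |x^2 - y^2| * (x + y) ≤ 4 * |x^3 - y^3| := by
  rcases le_total x y with h | h
  · rw [abs_of_nonpos (sub_nonpos.2 (pow_le_pow_left₀ hx h 2)), abs_of_nonpos (sub_nonpos.2 (pow_le_pow_left₀ hx h 3))]
    nlinarith [sq_nonneg (x + y), sq_nonneg (x - y), mul_nonneg hx hy]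
  · rw [abs_of_nonneg (sub_nonneg.2 (pow_le_pow_left₀ hy h 2)), abs_of_nonneg (sub_nonneg.2 (pow_le_pow_left₀ hy h 3))]
    nlinarith [sq_nonneg (x + y), sq_nonneg (x - y), mul_nonneg hx hy]

lemma rpow32 {t : ℝ} (ht : 0 ≤ t) : t ^ ((3:ℝ)/2) = (Real.sqrt t)^3 := by
  rw [Real.sqrt_eq_rpow, ← Real.rpow_natCast (t ^ ((1:ℝ)/2)) 3, ← Real.rpow_mul ht]
  norm_num

lemma key_lower {t s : ℝ} (ht : 0 ≤ t) (hs : 0 ≤ s) :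
    |t - s| * (Real.sqrt t + Real.sqrt s) / 4 ≤ |t ^ ((3:ℝ)/2) - s ^ ((3:ℝ)/2)| := by
  have h1 := cube_ineq (Real.sqrt_nonneg t) (Real.sqrt_nonneg s)
  rw [Real.sq_sqrt ht, Real.sq_sqrt hs] at h1
  rw [rpow32 ht, rpow32 hs]
  linarith

lemma sqrt_trade {t s : ℝ} (ht : 1 ≤ t) (hs : 1 ≤ s) :
    Real.sqrt t ≤ Real.sqrt s * (1 + |t - s|) := by
  have h0s : (0:ℝ) ≤ s := by linarith
  have h : t ≤ s * (1 + |t - s|)^2 := by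
    have h1 : t - s ≤ |t - s| := le_abs_self _
    have h2 : 0 ≤ |t - s| := abs_nonneg _
    nlinarith [mul_nonneg h2 (by linarith : (0:ℝ) ≤ 2*s - 1), mul_nonneg h0s (sq_nonneg (|t - s|))]
  calc Real.sqrt t ≤ Real.sqrt (s * (1 + |t - s|)^2) := Real.sqrt_le_sqrt h
    _ = Real.sqrt s * (1 + |t - s|) := by
        rw [Real.sqrt_mul h0s, Real.sqrt_sq (by positivity)]

lemma rpow_neg_half {t : ℝ} (ht : 0 ≤ t) : t ^ (-(1:ℝ)/2) = (Real.sqrt t)⁻¹ := by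
  rw [show (-(1:ℝ)/2) = -((1:ℝ)/2) by norm_num, Real.rpow_neg ht, ← Real.sqrt_eq_rpow]

lemma f_meas : Measurable (fun p : ℝ × ℝ =>
    (p.1 * p.2) ^ (-(1:ℝ)/2) * Real.exp (-|p.1 ^ ((3:ℝ)/2) - p.2 ^ ((3:ℝ)/2)|)) := by
  fun_prop

lemma restrict_prod_eq (A B : Set ℝ) :
    (volume : Measure (ℝ × ℝ)).restrict (A ×ˢ B) = (volume.restrict A).prod (volume.restrict B) := by
  rw [Measure.volume_eq_prod, Measure.prod_restrict]

lemma int_rpow_Ioc : IntegrableOn (fun x : ℝ => x ^ (-(1:ℝ)/2)) (Ioc 0 1) := by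
  have h := intervalIntegral.intervalIntegrable_rpow' (r := -(1:ℝ)/2) (a := 0) (b := 1) (by norm_num)
  rwa [intervalIntegrable_iff_integrableOn_Ioc_of_le zero_le_one] at h

lemma int_gamma : IntegrableOn (fun s : ℝ => s ^ (-(1:ℝ)/2) * Real.exp (-s)) (Ioi 0) := by
  have h := Real.GammaIntegral_convergent (by norm_num : (0:ℝ) < 1/2)
  refine h.congr_fun (fun x hx => ?_) measurableSet_Ioi
  rw [mul_comm]
  norm_num

lemma exp_abs_integrableOn {c t : ℝ} (hc : 0 < c) (ht : 1 < t) :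
    IntegrableOn (fun s : ℝ => Real.exp (-(|t - s| * c))) (Ioi 1) := by
  rw [← Ioc_union_Ioi_eq_Ioi ht.le]
  apply IntegrableOn.union
  · apply Continuous.integrableOn_Ioc
    fun_prop
  · refine Integrable.mono' (g := fun s => Real.exp (t * c) * Real.exp (-c * s))
      (((exp_neg_integrableOn_Ioi t hc)).const_mul _) ((by fun_prop : Continuous fun s:ℝ => Real.exp (-(|t - s| * c))).aestronglyMeasurable) ?_
    filter_upwards with s
    rw [Real.norm_of_nonneg (Real.exp_pos _).le, ← Real.exp_add]
    apply Real.exp_le_exp.2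
    have h1 : s - t ≤ |t - s| := by rw [abs_sub_comm]; exact le_abs_self _
    nlinarith

lemma exp_abs_integral_le {c t : ℝ} (hc : 0 < c) (ht : 1 < t) :
    ∫ s in Ioi (1:ℝ), Real.exp (-(|t - s| * c)) ≤ 2 / c := by
  have hint := exp_abs_integrableOn hc ht
  rw [← Ioc_union_Ioi_eq_Ioi ht.le] at hint ⊢
  have hdisj : Disjoint (Ioc (1:ℝ) t) (Ioi t) := by
    apply disjoint_left.2
    intro x hx hx'
    exact absurd hx.2 (not_le.2 hx')
  rw [setIntegral_union hdisj measurableSet_Ioi (hint.mono_set subset_union_left)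
    (hint.mono_set subset_union_right)]
  have h1 : ∫ s in Ioc (1:ℝ) t, Real.exp (-(|t - s| * c)) ≤ 1 / c := by
    have heq : ∀ s ∈ Ioc (1:ℝ) t, Real.exp (-(|t - s| * c)) = Real.exp (-c * t) * Real.exp (c * s) := by
      intro s hs
      rw [← Real.exp_add, abs_of_nonneg (by linarith [hs.2] : (0:ℝ) ≤ t - s)]
      ring_nf
    rw [setIntegral_congr_fun measurableSet_Ioc heq, ← intervalIntegral.integral_of_le ht.le,
      intervalIntegral.integral_const_mul]
    have hexp : ∫ s in (1:ℝ)..t, Real.exp (c * s) = c⁻¹ • ((Real.exp (c * t)) - Real.exp (c * 1)) := by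
      rw [intervalIntegral.integral_comp_mul_left (fun x => Real.exp x) (ne_of_gt hc),
        integral_exp]
    rw [hexp, smul_eq_mul]
    have h2 : Real.exp (-c * t + c * t) = 1 := by rw [neg_mul, neg_add_cancel, Real.exp_zero]
    have h3 : (0:ℝ) < Real.exp (-c * t) * Real.exp (c * 1) := by positivity
    calc Real.exp (-c*t) * (c⁻¹ * (Real.exp (c*t) - Real.exp (c*1)))
        = c⁻¹ * (Real.exp (-c*t + c*t) - Real.exp (-c*t) * Real.exp (c*1)) := by
          rw [Real.exp_add]; ring
      _ ≤ c⁻¹ * 1 := by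
          rw [h2]
          apply mul_le_mul_of_nonneg_left (by linarith) (inv_nonneg.2 hc.le)
      _ = 1 / c := by rw [mul_one, one_div]
  have h2 : ∫ s in Ioi t, Real.exp (-(|t - s| * c)) ≤ 1 / c := by
    have heq : ∀ s ∈ Ioi t, Real.exp (-(|t - s| * c)) = Real.exp (c * t) * Real.exp (-(c * s)) := by
      intro s hs
      rw [← Real.exp_add, abs_of_nonpos (by linarith [mem_Ioi.1 hs] : t - s ≤ 0)]
      ring_nf
    rw [setIntegral_congr_fun measurableSet_Ioi heq, integral_const_mul]
    have hsub : ∫ s in Ioi t, Real.exp (-(c * s)) = c⁻¹ • ∫ x in Ioi (c * t), Real.exp (-x) := by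
      rw [← integral_comp_mul_left_Ioi (fun x => Real.exp (-x)) t hc]
    rw [hsub, integral_exp_neg_Ioi, smul_eq_mul]
    refine le_of_eq ?_
    calc Real.exp (c*t) * (c⁻¹ * Real.exp (-(c*t)))
        = c⁻¹ * Real.exp (c*t + -(c*t)) := by rw [Real.exp_add]; ring
      _ = 1 / c := by rw [add_neg_cancel, Real.exp_zero, mul_one, one_div]
  calc ∫ (x : ℝ) in Ioc 1 t, Real.exp (-(|t - x| * c)) ∂volume
        + ∫ (x : ℝ) in Ioi t, Real.exp (-(|t - x| * c)) ∂volume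
      ≤ 1 / c + 1 / c := add_le_add h1 h2
    _ = 2 / c := by ring

noncomputable def F : ℝ × ℝ → ℝ := fun p =>
  (p.1 * p.2) ^ (-(1:ℝ)/2) * Real.exp (-|p.1 ^ ((3:ℝ)/2) - p.2 ^ ((3:ℝ)/2)|)

lemma piece1 : IntegrableOn F (Ioc 0 1 ×ˢ Ioi 0) := by
  have hg : Integrable (fun p : ℝ × ℝ =>
      (Real.exp 2 * p.1 ^ (-(1:ℝ)/2)) * (p.2 ^ (-(1:ℝ)/2) * Real.exp (-p.2)))
      ((volume.restrict (Ioc 0 1)).prod (volume.restrict (Ioi 0))) :=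
    Integrable.mul_prod (int_rpow_Ioc.const_mul _) int_gamma
  rw [← restrict_prod_eq] at hg
  refine hg.mono' f_meas.aestronglyMeasurable ?_
  filter_upwards [ae_restrict_mem (measurableSet_Ioc.prod measurableSet_Ioi)] with p hp
  obtain ⟨⟨h1, h1'⟩, h2⟩ := hp
  have h2 : (0:ℝ) < p.2 := h2
  simp only [F]
  rw [Real.norm_of_nonneg (mul_nonneg (Real.rpow_nonneg (mul_nonneg h1.le h2.le) _) (Real.exp_pos _).le), Real.mul_rpow h1.le h2.le]
  have hA : p.1 ^ ((3:ℝ)/2) ≤ 1 := Real.rpow_le_one h1.le h1' (by norm_num)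
  have hB : p.2 ≤ p.2 ^ ((3:ℝ)/2) + 1 := by
    rcases le_total p.2 1 with h | h
    · have : (0:ℝ) ≤ p.2 ^ ((3:ℝ)/2) := Real.rpow_nonneg h2.le _
      linarith
    · have : p.2 ^ (1:ℝ) ≤ p.2 ^ ((3:ℝ)/2) := Real.rpow_le_rpow_of_exponent_le h (by norm_num)
      rw [Real.rpow_one] at this
      linarith
  have hexp : Real.exp (-|p.1 ^ ((3:ℝ)/2) - p.2 ^ ((3:ℝ)/2)|) ≤ Real.exp 2 * Real.exp (-p.2) := by
    rw [← Real.exp_add]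
    apply Real.exp_le_exp.2
    have := neg_abs_le (p.1 ^ ((3:ℝ)/2) - p.2 ^ ((3:ℝ)/2))
    have hBnn : (0:ℝ) ≤ p.2 ^ ((3:ℝ)/2) := Real.rpow_nonneg h2.le _
    linarith
  calc p.1 ^ (-(1:ℝ)/2) * p.2 ^ (-(1:ℝ)/2) * Real.exp (-|p.1 ^ ((3:ℝ)/2) - p.2 ^ ((3:ℝ)/2)|)
      ≤ p.1 ^ (-(1:ℝ)/2) * p.2 ^ (-(1:ℝ)/2) * (Real.exp 2 * Real.exp (-p.2)) := by
        apply mul_le_mul_of_nonneg_left hexp (by positivity)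
    _ = (Real.exp 2 * p.1 ^ (-(1:ℝ)/2)) * (p.2 ^ (-(1:ℝ)/2) * Real.exp (-p.2)) := by ring

lemma piece2a : IntegrableOn F (Ioi 1 ×ˢ Ioc 0 1) := by
  have hexp1 : IntegrableOn (fun x : ℝ => Real.exp (-x)) (Ioi 1) := by
    simpa using exp_neg_integrableOn_Ioi 1 one_pos
  have hg : Integrable (fun p : ℝ × ℝ =>
      (Real.exp 1 * Real.exp (-p.1)) * p.2 ^ (-(1:ℝ)/2))
      ((volume.restrict (Ioi 1)).prod (volume.restrict (Ioc 0 1))) :=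
    Integrable.mul_prod (hexp1.const_mul _) int_rpow_Ioc
  rw [← restrict_prod_eq] at hg
  refine hg.mono' f_meas.aestronglyMeasurable ?_
  filter_upwards [ae_restrict_mem (measurableSet_Ioi.prod measurableSet_Ioc)] with p hp
  obtain ⟨h1, h2, h2'⟩ := hp
  have h1 : (1:ℝ) < p.1 := h1
  have h10 : (0:ℝ) < p.1 := lt_trans one_pos h1
  simp only [F]
  rw [Real.norm_of_nonneg (mul_nonneg (Real.rpow_nonneg (mul_nonneg h10.le h2.le) _) (Real.exp_pos _).le), Real.mul_rpow h10.le h2.le]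
  have ht1 : p.1 ^ (-(1:ℝ)/2) ≤ 1 :=
    Real.rpow_le_one_of_one_le_of_nonpos h1.le (by norm_num)
  have hA : p.1 ≤ p.1 ^ ((3:ℝ)/2) := by
    have := Real.rpow_le_rpow_of_exponent_le h1.le (by norm_num : (1:ℝ) ≤ 3/2)
    rwa [Real.rpow_one] at this
  have hB : p.2 ^ ((3:ℝ)/2) ≤ 1 := Real.rpow_le_one h2.le h2' (by norm_num)
  have hexp : Real.exp (-|p.1 ^ ((3:ℝ)/2) - p.2 ^ ((3:ℝ)/2)|) ≤ Real.exp 1 * Real.exp (-p.1) := by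
    rw [← Real.exp_add]
    apply Real.exp_le_exp.2
    have := le_abs_self (p.1 ^ ((3:ℝ)/2) - p.2 ^ ((3:ℝ)/2))
    linarith
  calc p.1 ^ (-(1:ℝ)/2) * p.2 ^ (-(1:ℝ)/2) * Real.exp (-|p.1 ^ ((3:ℝ)/2) - p.2 ^ ((3:ℝ)/2)|)
      ≤ 1 * p.2 ^ (-(1:ℝ)/2) * (Real.exp 1 * Real.exp (-p.1)) :=
        mul_le_mul (mul_le_mul_of_nonneg_right ht1 (by positivity)) hexp
          (Real.exp_pos _).le (by positivity)
    _ = (Real.exp 1 * Real.exp (-p.1)) * p.2 ^ (-(1:ℝ)/2) := by ring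

noncomputable def H : ℝ × ℝ → ℝ := fun p =>
  8 * p.1⁻¹ * Real.exp (-(|p.1 - p.2| * (Real.sqrt p.1 / 8)))

lemma H_meas : Measurable H := by
  unfold H; fun_prop

lemma H_int : Integrable H ((volume.restrict (Ioi 1)).prod (volume.restrict (Ioi 1))) := by
  refine (integrable_prod_iff H_meas.aestronglyMeasurable).2 ⟨?_, ?_⟩
  · filter_upwards [ae_restrict_mem measurableSet_Ioi] with t ht
    have ht1 : (1:ℝ) < t := ht
    have h0 : (0:ℝ) < t := lt_trans one_pos ht1
    have hc : 0 < Real.sqrt t / 8 := div_pos (Real.sqrt_pos.2 h0) (by norm_num)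
    simp only [H]
    exact (exp_abs_integrableOn hc ht1).const_mul (8 * t⁻¹)
  · have hg : Integrable (fun t : ℝ => 128 * t ^ (-(3:ℝ)/2)) (volume.restrict (Ioi 1)) := by
      have := integrableOn_Ioi_rpow_of_lt (show (-(3:ℝ)/2) < -1 by norm_num) one_pos
      exact this.const_mul 128
    refine Integrable.mono' hg
      ((H_meas.norm.aestronglyMeasurable).integral_prod_right') ?_
    filter_upwards [ae_restrict_mem measurableSet_Ioi] with t ht
    have ht1 : (1:ℝ) < t := ht
    have h0 : (0:ℝ) < t := lt_trans one_pos ht1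
    have hst : 0 < Real.sqrt t := Real.sqrt_pos.2 h0
    have hc : 0 < Real.sqrt t / 8 := div_pos hst (by norm_num)
    have hnn : ∀ s : ℝ, 0 ≤ H (t, s) := fun s => by
      simp only [H]; positivity
    have hnorm : (fun s => ‖H (t, s)‖) = fun s => H (t, s) :=
      funext fun s => Real.norm_of_nonneg (hnn s)
    rw [Real.norm_of_nonneg (integral_nonneg fun s => norm_nonneg _), hnorm]
    have hmul : ∫ s in Ioi (1:ℝ), H (t, s) =
        (8 * t⁻¹) * ∫ s in Ioi (1:ℝ), Real.exp (-(|t - s| * (Real.sqrt t / 8))) := by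
      simp only [H]; rw [integral_const_mul]
    rw [hmul]
    have hle := exp_abs_integral_le hc ht1
    have h32 : t ^ (-(3:ℝ)/2) = t⁻¹ * (Real.sqrt t)⁻¹ := by
      rw [show (-(3:ℝ)/2) = -(3/2) by norm_num, Real.rpow_neg h0.le,
        show ((3:ℝ)/2) = 1 + 1/2 by norm_num, Real.rpow_add h0, Real.rpow_one,
        ← Real.sqrt_eq_rpow, mul_inv]
    have htne : t ≠ 0 := ne_of_gt h0
    have hstne : Real.sqrt t ≠ 0 := ne_of_gt hst
    calc (8 * t⁻¹) * ∫ s in Ioi (1:ℝ), Real.exp (-(|t - s| * (Real.sqrt t / 8)))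
        ≤ (8 * t⁻¹) * (2 / (Real.sqrt t / 8)) := by
          apply mul_le_mul_of_nonneg_left hle (by positivity)
      _ = 128 * t ^ (-(3:ℝ)/2) := by rw [h32]; field_simp; ring

lemma ptbound {t s : ℝ} (ht : 1 < t) (hs : 1 < s) :
    (t * s) ^ (-(1:ℝ)/2) * Real.exp (-|t ^ ((3:ℝ)/2) - s ^ ((3:ℝ)/2)|) ≤ H (t, s) := by
  have h0t : (0:ℝ) < t := lt_trans one_pos ht
  have h0s : (0:ℝ) < s := lt_trans one_pos hs
  have hst : 0 < Real.sqrt t := Real.sqrt_pos.2 h0t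
  have hss : 0 < Real.sqrt s := Real.sqrt_pos.2 h0s
  set w := |t - s| with hw
  have hw0 : 0 ≤ w := abs_nonneg _
  have htrade := sqrt_trade ht.le hs.le
  have k1 : (Real.sqrt s)⁻¹ ≤ (1 + w) * (Real.sqrt t)⁻¹ := by
    have key : Real.sqrt t ≤ (1 + w) * Real.sqrt s := by
      rw [mul_comm]; exact htrade
    calc (Real.sqrt s)⁻¹ = Real.sqrt t * ((Real.sqrt t)⁻¹ * (Real.sqrt s)⁻¹) := by
          field_simp
      _ ≤ ((1 + w) * Real.sqrt s) * ((Real.sqrt t)⁻¹ * (Real.sqrt s)⁻¹) :=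
          mul_le_mul_of_nonneg_right key (by positivity)
      _ = (1 + w) * (Real.sqrt t)⁻¹ := by field_simp
  have hD : w * Real.sqrt t / 4 ≤ |t ^ ((3:ℝ)/2) - s ^ ((3:ℝ)/2)| := by
    have hk := key_lower h0t.le h0s.le
    nlinarith [Real.sqrt_nonneg s]
  have k2 : Real.exp (-|t ^ ((3:ℝ)/2) - s ^ ((3:ℝ)/2)|) ≤ Real.exp (-(w * Real.sqrt t / 4)) :=
    Real.exp_le_exp.2 (by linarith)
  have hsq1 : (1:ℝ) ≤ Real.sqrt t := by
    rw [show (1:ℝ) = Real.sqrt 1 from Real.sqrt_one.symm]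
    exact Real.sqrt_le_sqrt ht.le
  have k3 : 1 + w ≤ 8 * Real.exp (w * Real.sqrt t / 8) := by
    have h1 := Real.add_one_le_exp (w * Real.sqrt t / 8)
    nlinarith [mul_nonneg hw0 (by linarith : (0:ℝ) ≤ Real.sqrt t - 1)]
  rw [Real.mul_rpow h0t.le h0s.le, rpow_neg_half h0t.le, rpow_neg_half h0s.le]
  have tinv : (Real.sqrt t)⁻¹ * (Real.sqrt t)⁻¹ = t⁻¹ := by
    rw [← mul_inv, Real.mul_self_sqrt h0t.le]
  calc (Real.sqrt t)⁻¹ * (Real.sqrt s)⁻¹ * Real.exp (-|t ^ ((3:ℝ)/2) - s ^ ((3:ℝ)/2)|)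
      ≤ (Real.sqrt t)⁻¹ * ((1 + w) * (Real.sqrt t)⁻¹) * Real.exp (-(w * Real.sqrt t / 4)) :=
        mul_le_mul (mul_le_mul_of_nonneg_left k1 (by positivity)) k2
          (Real.exp_pos _).le (by positivity)
    _ = t⁻¹ * (1 + w) * Real.exp (-(w * Real.sqrt t / 4)) := by
        rw [← tinv]; ring
    _ ≤ t⁻¹ * (8 * Real.exp (w * Real.sqrt t / 8)) * Real.exp (-(w * Real.sqrt t / 4)) :=
        mul_le_mul_of_nonneg_right (mul_le_mul_of_nonneg_left k3 (inv_nonneg.2 h0t.le))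
          (Real.exp_pos _).le
    _ = H (t, s) := by
        simp only [H]
        rw [show Real.exp (-(w * (Real.sqrt t / 8))) =
            Real.exp (w * Real.sqrt t / 8) * Real.exp (-(w * Real.sqrt t / 4)) by
          rw [← Real.exp_add]; congr 1; ring]
        ring

lemma piece2b : IntegrableOn F (Ioi 1 ×ˢ Ioi 1) := by
  have hH : IntegrableOn H (Ioi 1 ×ˢ Ioi 1) := by
    rw [IntegrableOn, restrict_prod_eq]; exact H_int
  refine hH.mono' f_meas.aestronglyMeasurable ?_
  filter_upwards [ae_restrict_mem (measurableSet_Ioi.prod measurableSet_Ioi)] with p hp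
  obtain ⟨h1, h2⟩ := hp
  have h1 : (1:ℝ) < p.1 := h1
  have h2 : (1:ℝ) < p.2 := h2
  simp only [F]
  rw [Real.norm_of_nonneg (mul_nonneg (Real.rpow_nonneg
    (mul_nonneg (le_of_lt (lt_trans one_pos h1)) (le_of_lt (lt_trans one_pos h2))) _)
    (Real.exp_pos _).le)]
  exact ptbound h1 h2

/-- The double integral `∫_0^∞ ∫_0^∞ (t s)^{-1/2} e^{-|t^{3/2} - s^{3/2}|} dt ds` is finite. -/
theorem stmt3 :
    IntegrableOn
      (fun p : ℝ × ℝ =>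
        (p.1 * p.2) ^ (-(1:ℝ)/2) * Real.exp (-|p.1 ^ ((3:ℝ)/2) - p.2 ^ ((3:ℝ)/2)|))
      (Set.Ioi (0:ℝ) ×ˢ Set.Ioi (0:ℝ)) := by
  have hsub : Set.Ioi (0:ℝ) ×ˢ Set.Ioi (0:ℝ) ⊆
      (Ioc 0 1 ×ˢ Ioi 0) ∪ ((Ioi 1 ×ˢ Ioc 0 1) ∪ (Ioi 1 ×ˢ Ioi 1)) := by
    rintro ⟨t, s⟩ ⟨ht, hs⟩
    rcases le_or_gt t 1 with h | h
    · exact Or.inl ⟨⟨ht, h⟩, hs⟩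
    · rcases le_or_gt s 1 with h' | h'
      · exact Or.inr (Or.inl ⟨h, hs, h'⟩)
      · exact Or.inr (Or.inr ⟨h, h'⟩)
  have h := (piece1.union (piece2a.union piece2b)).mono_set hsub
  exact h
end

section
/- Let 𝒜 be analytic near 0 with 𝒜'(0) > 0, and for h > 0 small and k ∈ ℤ define e_k(h) as the solution near 0 of 𝒜(E) = (k + 1/2)π h (when it exists). Then e_k(h) = λ_k(h) h^{2/3} − (λ_k(h)² 𝒜''(0) / (2𝒜'(0))) h^{4/3} + O(h²) uniformly for those k with λ_k(h) = O(1), where λ_k(h) := (−2𝒜(0) + (2k+1)π h)/(2𝒜'(0) h^{2/3}). -/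
open Real

set_option maxHeartbeats 1000000 in
/-- Bohr–Sommerfeld expansion: let `𝒜` be analytic near `0` with `𝒜'(0) > 0`, and let
`λ_k(h) = (-2𝒜(0) + (2k+1)π h)/(2𝒜'(0) h^{2/3})`. Then any solution `e` near `0` of
`𝒜(e) = (k + 1/2)π h` satisfies
`e = λ_k(h) h^{2/3} - (λ_k(h)² 𝒜''(0)/(2𝒜'(0))) h^{4/3} + O(h²)`, uniformly for the `k`
with `λ_k(h) = O(1)`. -/
theorem stmt15 (𝒜 : ℝ → ℝ) (hA : AnalyticAt ℝ 𝒜 0) (hA' : 0 < deriv 𝒜 0)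
    (C₀ : ℝ) (hC₀ : 0 < C₀) :
    ∃ C > 0, ∃ h₀ > 0, ∃ r > 0, ∀ h : ℝ, 0 < h → h < h₀ → ∀ k : ℤ,
      ∀ lam : ℝ, lam = (-2 * 𝒜 0 + (2 * (k:ℝ) + 1) * π * h) / (2 * deriv 𝒜 0 * h ^ ((2:ℝ)/3)) →
      |lam| ≤ C₀ →
      ∀ e : ℝ, |e| < r → 𝒜 e = ((k:ℝ) + 1/2) * π * h →
        |e - (lam * h ^ ((2:ℝ)/3)
              - lam ^ 2 * iteratedDeriv 2 𝒜 0 / (2 * deriv 𝒜 0) * h ^ ((4:ℝ)/3))|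
          ≤ C * h ^ 2 := by
  obtain ⟨p, hp⟩ := hA
  set a := deriv 𝒜 0 with hadef
  set c2 := p.coeff 2 with hc2def
  -- coefficient identities
  have hc1 : a = p.coeff 1 := hp.deriv
  have ha0 : a ≠ 0 := ne_of_gt hA'
  have hc2v : iteratedDeriv 2 𝒜 0 = 2 * c2 := by
    obtain ⟨R₀, hpb⟩ := hp
    have h1 := hpb.factorial_smul (y := (1:ℝ)) 2
    rw [iteratedDeriv_eq_iteratedFDeriv, ← h1,
      FormalMultilinearSeries.apply_eq_pow_smul_coeff]
    norm_num [Nat.factorial]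
    exact hc2def.symm
  -- remainder bound
  have hbig := hp.isBigO_sub_partialSum_pow 3
  rw [Asymptotics.isBigO_iff] at hbig
  obtain ⟨M₀, hM₀⟩ := hbig
  rw [Metric.eventually_nhds_iff] at hM₀
  obtain ⟨r₁, hr₁pos, hM₀'⟩ := hM₀
  set M := max M₀ 1 with hMdef
  have hM1 : (1:ℝ) ≤ M := le_max_right _ _
  have hMpos : 0 < M := lt_of_lt_of_le one_pos hM1
  have key : ∀ y : ℝ, |y| < r₁ → |𝒜 y - (𝒜 0 + a * y + c2 * y ^ 2)| ≤ M * |y| ^ 3 := by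
    intro y hy
    have hy' : dist y 0 < r₁ := by simpa [dist_zero_right] using hy
    have h1 := hM₀' hy'
    have hps : p.partialSum 3 y = 𝒜 0 + a * y + c2 * y ^ 2 := by
      have hc0 : p.coeff 0 = 𝒜 0 := hp.coeff_zero 1
      simp only [FormalMultilinearSeries.partialSum, Finset.sum_range_succ,
        Finset.sum_range_zero, FormalMultilinearSeries.apply_eq_pow_smul_coeff,
        smul_eq_mul]
      rw [hc0, ← hc1, ← hc2def]
      ring
    rw [zero_add, hps] at h1
    calc |𝒜 y - (𝒜 0 + a * y + c2 * y ^ 2)| ≤ M₀ * ‖‖y‖ ^ 3‖ := h1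
      _ ≤ M * |y| ^ 3 := by
          rw [Real.norm_eq_abs, Real.norm_eq_abs, abs_of_nonneg (by positivity)]
          exact mul_le_mul_of_nonneg_right (le_max_left _ _) (by positivity)
  set b := |c2| with hbdef
  have hb : 0 ≤ b := abs_nonneg _
  set K := (4 * b * C₀ ^ 2 + 8 * M * C₀ ^ 3) / a with hKdef
  have hK : 0 ≤ K := by positivity
  have haK : a * K = 4 * b * C₀ ^ 2 + 8 * M * C₀ ^ 3 := by
    rw [hKdef]; field_simp
  refine ⟨(3 * C₀ * K * b + 8 * M * C₀ ^ 3) / a + 1, by positivity, 1, one_pos,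
    min r₁ (min 1 (a / (2 * (b + M + 1)))), by positivity, ?_⟩
  intro h hh hh1 k lam hlam hlamC e he hAe
  set t := h ^ ((2:ℝ)/3) with htdef
  have ht : 0 < t := Real.rpow_pos_of_pos hh _
  have ht1 : t ≤ 1 := Real.rpow_le_one hh.le hh1.le (by norm_num)
  have ht3 : t ^ 3 = h ^ 2 := by
    rw [htdef, ← Real.rpow_natCast (h ^ ((2:ℝ)/3)) 3, ← Real.rpow_mul hh.le,
      ← Real.rpow_natCast h 2]
    norm_num
  have ht2 : t ^ 2 = h ^ ((4:ℝ)/3) := by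
    rw [htdef, ← Real.rpow_natCast (h ^ ((2:ℝ)/3)) 2, ← Real.rpow_mul hh.le]
    norm_num
  -- extract smallness of e
  have her₁ : |e| < r₁ := lt_of_lt_of_le he (min_le_left _ _)
  have he1 : |e| ≤ 1 := le_of_lt (lt_of_lt_of_le he ((min_le_right _ _).trans (min_le_left _ _)))
  have heA : |e| ≤ a / (2 * (b + M + 1)) :=
    le_of_lt (lt_of_lt_of_le he ((min_le_right _ _).trans (min_le_right _ _)))
  have hE0 : 0 ≤ |e| := abs_nonneg e
  -- the basic equation
  have ht0 : t ≠ 0 := ne_of_gt ht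
  have hμ : a * lam * t = 𝒜 e - 𝒜 0 := by
    rw [hlam, hAe]
    field_simp
    ring
  set R' := 𝒜 e - 𝒜 0 - a * e - c2 * e ^ 2 with hR'def
  have hR : |R'| ≤ M * |e| ^ 3 := by
    have := key e her₁
    have heq : R' = 𝒜 e - (𝒜 0 + a * e + c2 * e ^ 2) := by rw [hR'def]; ring
    rw [heq]; exact this
  have hreq : a * e = a * lam * t - c2 * e ^ 2 - R' := by
    rw [hR'def, hμ]; ring
  -- step 1 : |e| ≤ 2 C₀ t
  have e1 : a * |e| ≤ a * C₀ * t + b * |e| ^ 2 + M * |e| ^ 3 := by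
    calc a * |e| = |a * e| := by rw [abs_mul, abs_of_pos hA']
      _ = |a * lam * t + (-(c2 * e ^ 2)) + (-R')| := by rw [hreq]; ring_nf
      _ ≤ |a * lam * t| + |(-(c2 * e ^ 2))| + |(-R')| := abs_add_three _ _ _
      _ ≤ a * C₀ * t + b * |e| ^ 2 + M * |e| ^ 3 := by
          rw [abs_neg, abs_neg]
          have h1 : |a * lam * t| ≤ a * C₀ * t := by
            rw [abs_mul, abs_mul, abs_of_pos hA', abs_of_pos ht]
            have h0 := mul_le_mul_of_nonneg_left hlamC hA'.le
            exact mul_le_mul_of_nonneg_right h0 ht.le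
          have h2 : |c2 * e ^ 2| = b * |e| ^ 2 := by
            rw [abs_mul, abs_pow]
          linarith [hR]
  have e2 : b * |e| ^ 2 + M * |e| ^ 3 ≤ (a / 2) * |e| := by
    have hbM : (b + M) * |e| ≤ a / 2 := by
      calc (b + M) * |e| ≤ (b + M + 1) * (a / (2 * (b + M + 1))) := by
            apply mul_le_mul (by linarith) heA hE0 (by positivity)
        _ = a / 2 := by field_simp
    have h1 : M * |e| ^ 3 ≤ M * |e| ^ 2 :=
      mul_le_mul_of_nonneg_left (pow_le_pow_of_le_one hE0 he1 (by norm_num)) hMpos.le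
    have h2 := mul_le_mul_of_nonneg_right hbM hE0
    have h4 : b * |e| ^ 2 + M * |e| ^ 2 = (b + M) * |e| * |e| := by ring
    linarith
  have hE : |e| ≤ 2 * C₀ * t := by
    have h3 : (a/2) * |e| ≤ (a/2) * (2 * C₀ * t) := by linarith
    exact le_of_mul_le_mul_left h3 (by positivity)
  -- step 2 : |lam t - e| ≤ K t²
  have e3 : a * |lam * t - e| ≤ a * K * t ^ 2 := by
    have hreq2 : a * (lam * t - e) = c2 * e ^ 2 + R' := by
      rw [hR'def, ← hμ]; ring
    have p2 : |e| ^ 2 ≤ (2 * C₀ * t) ^ 2 := pow_le_pow_left₀ hE0 hE 2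
    have p3 : |e| ^ 3 ≤ (2 * C₀ * t) ^ 3 := pow_le_pow_left₀ hE0 hE 3
    calc a * |lam * t - e| = |a * (lam * t - e)| := by rw [abs_mul, abs_of_pos hA']
      _ = |c2 * e ^ 2 + R'| := by rw [hreq2]
      _ ≤ |c2 * e ^ 2| + |R'| := abs_add_le _ _
      _ ≤ b * |e| ^ 2 + M * |e| ^ 3 := by
          rw [abs_mul, abs_pow]; linarith [hR]
      _ ≤ b * (2 * C₀ * t) ^ 2 + M * (2 * C₀ * t) ^ 3 :=
          add_le_add (mul_le_mul_of_nonneg_left p2 hb) (mul_le_mul_of_nonneg_left p3 hMpos.le)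
      _ ≤ (4 * b * C₀ ^ 2 + 8 * M * C₀ ^ 3) * t ^ 2 := by
          have h5 : M * (2 * C₀ * t) ^ 3 = 8 * M * C₀ ^ 3 * (t ^ 2 * t) := by ring
          have h6 : 8 * M * C₀ ^ 3 * (t ^ 2 * t) ≤ 8 * M * C₀ ^ 3 * (t ^ 2 * 1) := by
            have : 0 ≤ 8 * M * C₀ ^ 3 := by positivity
            have h7 : t ^ 2 * t ≤ t ^ 2 * 1 := mul_le_mul_of_nonneg_left ht1 (sq_nonneg t)
            exact mul_le_mul_of_nonneg_left h7 this
          have h8 : b * (2 * C₀ * t) ^ 2 = 4 * b * C₀ ^ 2 * t ^ 2 := by ring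
          have h9 : (4 * b * C₀ ^ 2 + 8 * M * C₀ ^ 3) * t ^ 2
              = 4 * b * C₀ ^ 2 * t ^ 2 + 8 * M * C₀ ^ 3 * (t ^ 2 * 1) := by ring
          linarith
      _ = a * K * t ^ 2 := by rw [haK]
  have hlt : |lam * t - e| ≤ K * t ^ 2 := by
    have := (mul_le_mul_iff_right₀ hA').mp (by linarith [e3] : a * |lam * t - e| ≤ a * (K * t ^ 2))
    exact this
  -- step 3 : final bound
  have hsum : |lam * t + e| ≤ 3 * C₀ * t := by
    calc |lam * t + e| ≤ |lam * t| + |e| := abs_add_le _ _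
      _ ≤ C₀ * t + 2 * C₀ * t := by
          rw [abs_mul, abs_of_pos ht]
          have := mul_le_mul_of_nonneg_right hlamC ht.le
          linarith
      _ = 3 * C₀ * t := by ring
  have hdiff : |lam ^ 2 * t ^ 2 - e ^ 2| ≤ K * t ^ 2 * (3 * C₀ * t) := by
    have hid : lam ^ 2 * t ^ 2 - e ^ 2 = (lam * t - e) * (lam * t + e) := by ring
    rw [hid, abs_mul]
    exact mul_le_mul hlt hsum (abs_nonneg _) (by positivity)
  rw [hc2v, ← ht2]
  set X := e - (lam * t - lam ^ 2 * (2 * c2) / (2 * a) * t ^ 2) with hXdef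
  have key3 : a * X = c2 * (lam ^ 2 * t ^ 2 - e ^ 2) - R' := by
    rw [hXdef, hR'def, ← hμ]
    have hc : lam ^ 2 * (2 * c2) / (2 * a) * t ^ 2 * a = lam ^ 2 * c2 * t ^ 2 := by
      field_simp
    linear_combination hc
  have final : a * |X| ≤ (3 * C₀ * K * b + 8 * M * C₀ ^ 3) * t ^ 3 := by
    have p3 : |e| ^ 3 ≤ (2 * C₀ * t) ^ 3 := pow_le_pow_left₀ hE0 hE 3
    calc a * |X| = |a * X| := by rw [abs_mul, abs_of_pos hA']
      _ = |c2 * (lam ^ 2 * t ^ 2 - e ^ 2) + (-R')| := by rw [key3]; ring_nf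
      _ ≤ |c2 * (lam ^ 2 * t ^ 2 - e ^ 2)| + |(-R')| := abs_add_le _ _
      _ ≤ b * (K * t ^ 2 * (3 * C₀ * t)) + M * (2 * C₀ * t) ^ 3 := by
          rw [abs_neg, abs_mul]
          have := mul_le_mul_of_nonneg_left hdiff hb
          have hRR : |R'| ≤ M * (2 * C₀ * t) ^ 3 :=
            hR.trans (mul_le_mul_of_nonneg_left p3 hMpos.le)
          linarith
      _ = (3 * C₀ * K * b + 8 * M * C₀ ^ 3) * t ^ 3 := by ring
  have hCgoal : a * |X| ≤ a * (((3 * C₀ * K * b + 8 * M * C₀ ^ 3) / a + 1) * h ^ 2) := by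
    have haC : a * (((3 * C₀ * K * b + 8 * M * C₀ ^ 3) / a + 1) * h ^ 2)
        = (3 * C₀ * K * b + 8 * M * C₀ ^ 3) * h ^ 2 + a * h ^ 2 := by
      field_simp
    rw [haC, ← ht3]
    have h4 : 0 ≤ a * t ^ 3 := by positivity
    linarith [final]
  exact (mul_le_mul_iff_right₀ hA').mp hCgoal
end
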